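/- arXiv:1205.5290 — 4 statements merged into one kernel-verified Lean document; each statement's English description precedes it below -/
import Mathlib

section
/- Let W be a finite group and H a proper subgroup of W. Then there exists a conjugacy class U of W such that H has empty intersection with U. (Jordan's theorem on conjugacy classes.) -/
open Matrix

abbrev GLn (n : ℕ) (F : Type*) [Field F] := GL (Fin n) F

noncomputable def matEval {n : ℕ} {F : Type*} [Field F] (M : Matrix (Fin n) (Fin n) F)
    (p : MvPolynomial (Fin n × Fin n) F) : F :=
  MvPolynomial.eval (fun ij => M ij.1 ij.2) p

def IsZClosed {n : ℕ} {F : Type*} [Field F] (s : Set (GLn n F)) : Prop :=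
  ∃ I : Set (MvPolynomial (Fin n × Fin n) F),
    s = {g : GLn n F | ∀ p ∈ I, matEval (g : Matrix (Fin n) (Fin n) F) p = 0}

def ZConnected {n : ℕ} {F : Type*} [Field F] (s : Set (GLn n F)) : Prop :=
  s.Nonempty ∧ ∀ t u : Set (GLn n F), IsZClosed t → IsZClosed u →
    s ⊆ t ∪ u → s ⊆ t ∨ s ⊆ u

def IsIdentityComponent {n : ℕ} {F : Type*} [Field F]
    (G Go : Subgroup (GLn n F)) : Prop :=
  Go ≤ G ∧ IsZClosed (Go : Set (GLn n F)) ∧ ZConnected (Go : Set (GLn n F)) ∧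
    ∀ s : Set (GLn n F), s ⊆ (G : Set (GLn n F)) → IsZClosed s → ZConnected s →
      (1 : GLn n F) ∈ s → s ⊆ (Go : Set (GLn n F))

def IsUnipotentMat {n : ℕ} {F : Type*} [Field F] (M : Matrix (Fin n) (Fin n) F) : Prop :=
  IsNilpotent (M - 1)

def IsSemisimpleElt {n : ℕ} {F : Type*} [Field F] (g : GLn n F) : Prop :=
  Module.End.IsSemisimple
    (Matrix.toLin' ((g : GLn n F) : Matrix (Fin n) (Fin n) F) : Module.End F (Fin n → F))

def IsDiagonalizableSubgroup {n : ℕ} {F : Type*} [Field F] (D : Subgroup (GLn n F)) : Prop :=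
  ∃ P : GLn n F, ∀ g ∈ D, ∀ i j : Fin n, i ≠ j →
    ((P * g * P⁻¹ : GLn n F) : Matrix (Fin n) (Fin n) F) i j = 0

def IsAlgTorus {n : ℕ} {F : Type*} [Field F] (T : Subgroup (GLn n F)) : Prop :=
  IsDiagonalizableSubgroup T ∧ IsZClosed (T : Set (GLn n F)) ∧ ZConnected (T : Set (GLn n F))

def IsMaximalTorusIn {n : ℕ} {F : Type*} [Field F] (G T : Subgroup (GLn n F)) : Prop :=
  T ≤ G ∧ IsAlgTorus T ∧
    ∀ T' : Subgroup (GLn n F), T' ≤ G → IsAlgTorus T' → T ≤ T' → T' = T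

def IsReductiveGrp {n : ℕ} {F : Type*} [Field F] (Go : Subgroup (GLn n F)) : Prop :=
  ∀ U : Subgroup (GLn n F), U ≤ Go → IsZClosed (U : Set (GLn n F)) →
    ZConnected (U : Set (GLn n F)) →
    (∀ g ∈ Go, ∀ u ∈ U, g * u * g⁻¹ ∈ U) →
    (∀ u ∈ U, IsUnipotentMat ((u : GLn n F) : Matrix (Fin n) (Fin n) F)) → U = ⊥

def IsSemisimpleGrp {n : ℕ} {F : Type*} [Field F] (Go : Subgroup (GLn n F)) : Prop :=
  IsReductiveGrp Go ∧ Set.Finite {g : GLn n F | g ∈ Go ∧ ∀ h ∈ Go, g * h = h * g}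

def IsCartanSubgroup {n : ℕ} {F : Type*} [Field F] (G C Co : Subgroup (GLn n F)) : Prop :=
  C ≤ G ∧ IsDiagonalizableSubgroup C ∧ IsZClosed (C : Set (GLn n F)) ∧
    IsIdentityComponent C Co ∧
    (∃ g ∈ C, ∀ x ∈ C, ∃ k : ℤ, g ^ k * x⁻¹ ∈ Co) ∧
    C.relIndex (G ⊓ Subgroup.normalizer (C : Set (GLn n F))) ≠ 0

theorem jordan_conjugacy_class_avoidance (W : Type*) [Group W] [Finite W]
    (H : Subgroup W) (hH : H ≠ ⊤) :
    ∃ w : W, ∀ x : W, x * w * x⁻¹ ∉ H := by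
    classical
  have : Fintype W := Fintype.ofFinite W
  by_contra hc
  push_neg at hc
  set N := Subgroup.normalizer (H : Set W) with hN
  -- conjugate of H by the representative of a coset, minus 1
  set F : W ⧸ N → Finset W := fun c =>
    (Finset.univ.image (fun h : H => (c.out : W) * h * (c.out : W)⁻¹)) \ {1} with hF
  have hcover : (Finset.univ \ {1} : Finset W) ⊆ Finset.univ.biUnion F := by
    intro w hw
    simp only [Finset.mem_sdiff, Finset.mem_singleton] at hw
    obtain ⟨x, hx⟩ := hc w
    refine Finset.mem_biUnion.mpr ⟨QuotientGroup.mk x⁻¹, Finset.mem_univ _, ?_⟩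
    have hrel : (x⁻¹)⁻¹ * (QuotientGroup.mk x⁻¹ : W ⧸ N).out ∈ N := by
      rw [← QuotientGroup.eq]
      exact ((QuotientGroup.mk x⁻¹ : W ⧸ N).out_eq).symm
    set y := (QuotientGroup.mk x⁻¹ : W ⧸ N).out with hy
    -- y = x⁻¹ * n with n ∈ N
    have hn : x * y ∈ N := by simpa using hrel
    -- w = y * (y⁻¹ * w * y) * y⁻¹ and y⁻¹ w y ∈ H
    have hwH : y⁻¹ * w * y ∈ H := by
      have hn' : (x * y)⁻¹ ∈ N := N.inv_mem hn
      have := (Subgroup.mem_normalizer_iff.mp hn' (x * w * x⁻¹)).mp hx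
      have e : (x*y)⁻¹ * (x * w * x⁻¹) * ((x*y)⁻¹)⁻¹ = y⁻¹ * w * y := by group
      rwa [e] at this
    simp only [hF, Finset.mem_sdiff, Finset.mem_singleton, Finset.mem_image]
    constructor
    · exact ⟨⟨y⁻¹ * w * y, hwH⟩, Finset.mem_univ _, by rw [← hy]; group⟩
    · exact hw.2
  have hcardF : ∀ c, (F c).card ≤ Nat.card H - 1 := by
    intro c
    have h1 : (1 : W) ∈ Finset.univ.image (fun h : H => (c.out : W) * h * (c.out : W)⁻¹) := by
      refine Finset.mem_image.mpr ⟨1, Finset.mem_univ _, by simp⟩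
    have := Finset.card_sdiff_of_subset (by simpa using h1 :
      ({1} : Finset W) ⊆ Finset.univ.image (fun h : H => (c.out : W) * h * (c.out : W)⁻¹))
    rw [hF]
    simp only
    rw [this, Finset.card_singleton]
    have : (Finset.univ.image (fun h : H => (c.out : W) * h * (c.out : W)⁻¹)).card
        ≤ Nat.card H := by
      simpa [Nat.card_eq_fintype_card] using Finset.card_image_le.trans (le_of_eq (by simp))
    omega
  -- total count
  have hbig : Fintype.card W - 1 ≤ N.index * (Nat.card H - 1) := by
    calc Fintype.card W - 1 = (Finset.univ \ {1} : Finset W).card := by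
          rw [Finset.card_sdiff_of_subset (by simp)]; simp
      _ ≤ (Finset.univ.biUnion F).card := Finset.card_le_card hcover
      _ ≤ ∑ c : W ⧸ N, (F c).card := Finset.card_biUnion_le
      _ ≤ ∑ _c : W ⧸ N, (Nat.card H - 1) := Finset.sum_le_sum (fun c _ => hcardF c)
      _ = N.index * (Nat.card H - 1) := by
          simp [Finset.sum_const, Subgroup.index, Nat.card_eq_fintype_card]
  have hle : N.index ≤ H.index := Nat.le_of_dvd
    (Nat.pos_of_ne_zero Subgroup.index_ne_zero_of_finite)
    (Subgroup.index_dvd_of_le Subgroup.le_normalizer)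
  have hmul : Nat.card H * H.index = Nat.card W := Subgroup.card_mul_index H
  have h2 : 1 < H.index := Subgroup.one_lt_index_of_ne_top hH
  have hHpos : 0 < Nat.card H := Nat.card_pos
  have hWcard : Nat.card W = Fintype.card W := Nat.card_eq_fintype_card
  nlinarith [hbig, hle, hmul, h2, hHpos, Nat.sub_add_cancel hHpos,
    Nat.sub_add_cancel (Nat.one_le_iff_ne_zero.mpr (Fintype.card_ne_zero (α := W)))]
end

section
/- Let H be a linear algebraic group over an algebraically closed field with H° reductive, C ≤ H a Cartan subgroup, and h ∈ C a semisimple element such that hC° generates C/C°. Then C° is a maximal torus of the identity component of the centralizer Z_{H°}(h). -/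
open Matrix

section Aux

open MvPolynomial

variable {n : ℕ} {F : Type*} [Field F]

lemma isZClosed_empty : IsZClosed (∅ : Set (GLn n F)) := by
  refine ⟨{1}, ?_⟩
  ext g
  simp [matEval]

lemma isZClosed_inter {s t : Set (GLn n F)} (hs : IsZClosed s) (ht : IsZClosed t) :
    IsZClosed (s ∩ t) := by
  obtain ⟨I, rfl⟩ := hs
  obtain ⟨J, rfl⟩ := ht
  refine ⟨I ∪ J, ?_⟩
  ext g
  simp only [Set.mem_inter_iff, Set.mem_setOf_eq, Set.mem_union]
  constructor
  · rintro ⟨h1, h2⟩ p (hp | hp)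
    · exact h1 p hp
    · exact h2 p hp
  · intro hg
    exact ⟨fun p hp => hg p (Or.inl hp), fun p hp => hg p (Or.inr hp)⟩

lemma isZClosed_union {s t : Set (GLn n F)} (hs : IsZClosed s) (ht : IsZClosed t) :
    IsZClosed (s ∪ t) := by
  obtain ⟨I, rfl⟩ := hs
  obtain ⟨J, rfl⟩ := ht
  refine ⟨Set.image2 (· * ·) I J, ?_⟩
  ext g
  simp only [Set.mem_union, Set.mem_setOf_eq]
  constructor
  · rintro (hg | hg) p hp
    · obtain ⟨p1, h1, p2, h2, rfl⟩ := hp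
      have : matEval (g : Matrix (Fin n) (Fin n) F) (p1 * p2)
          = matEval (g : Matrix (Fin n) (Fin n) F) p1 * matEval (g : Matrix (Fin n) (Fin n) F) p2 :=
        map_mul _ _ _
      rw [this, hg p1 h1, zero_mul]
    · obtain ⟨p1, h1, p2, h2, rfl⟩ := hp
      have : matEval (g : Matrix (Fin n) (Fin n) F) (p1 * p2)
          = matEval (g : Matrix (Fin n) (Fin n) F) p1 * matEval (g : Matrix (Fin n) (Fin n) F) p2 :=
        map_mul _ _ _
      rw [this, hg p2 h2, mul_zero]
  · intro hg
    by_contra hcon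
    push_neg at hcon
    obtain ⟨⟨p1, h1, hp1⟩, ⟨p2, h2, hp2⟩⟩ := hcon
    have := hg (p1 * p2) (Set.mem_image2_of_mem h1 h2)
    rw [show matEval ((g : GLn n F) : Matrix (Fin n) (Fin n) F) (p1 * p2)
        = matEval ((g : GLn n F) : Matrix (Fin n) (Fin n) F) p1
          * matEval ((g : GLn n F) : Matrix (Fin n) (Fin n) F) p2 from map_mul (MvPolynomial.eval _) _ _] at this
    exact (mul_ne_zero hp1 hp2) this

lemma isZClosed_biUnion {α : Type*} [DecidableEq α] (ι : Finset α) (f : α → Set (GLn n F))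
    (hf : ∀ a ∈ ι, IsZClosed (f a)) : IsZClosed (⋃ a ∈ ι, f a) := by
  induction ι using Finset.induction_on with
  | empty => simpa using (isZClosed_empty : IsZClosed (∅ : Set (GLn n F)))
  | @insert a ι ha ih =>
    rw [Finset.set_biUnion_insert]
    exact isZClosed_union (hf a (Finset.mem_insert_self a ι))
      (ih fun b hb => hf b (Finset.mem_insert_of_mem hb))

lemma zconnected_subset_of_biUnion {α : Type*} [DecidableEq α] {s : Set (GLn n F)} (hs : ZConnected s)
    (ι : Finset α) (f : α → Set (GLn n F)) (hf : ∀ a ∈ ι, IsZClosed (f a))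
    (hsub : s ⊆ ⋃ a ∈ ι, f a) : ∃ a ∈ ι, s ⊆ f a := by
  induction ι using Finset.induction_on with
  | empty =>
    obtain ⟨x, hx⟩ := hs.1
    simpa using hsub hx
  | @insert a ι ha ih =>
    rw [Finset.set_biUnion_insert] at hsub
    rcases hs.2 _ _ (hf a (Finset.mem_insert_self a ι))
      (isZClosed_biUnion ι f fun b hb => hf b (Finset.mem_insert_of_mem hb)) hsub with h | h
    · exact ⟨a, Finset.mem_insert_self a ι, h⟩
    · obtain ⟨b, hb, hb'⟩ := ih (fun b hb => hf b (Finset.mem_insert_of_mem hb)) h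
      exact ⟨b, Finset.mem_insert_of_mem hb, hb'⟩

lemma isZClosed_smul (g : GLn n F) {s : Set (GLn n F)} (hs : IsZClosed s) :
    IsZClosed ((fun x => g * x) '' s) := by
  obtain ⟨I, rfl⟩ := hs
  classical
  set A : Matrix (Fin n) (Fin n) F := ((g⁻¹ : GLn n F) : Matrix (Fin n) (Fin n) F) with hA
  refine ⟨(bind₁ fun ij : Fin n × Fin n => ∑ k, MvPolynomial.C (A ij.1 k) * X (k, ij.2)) '' I, ?_⟩
  have key : ∀ (x : GLn n F) (p : MvPolynomial (Fin n × Fin n) F),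
      matEval (x : Matrix (Fin n) (Fin n) F)
        (bind₁ (fun ij : Fin n × Fin n => ∑ k, MvPolynomial.C (A ij.1 k) * X (k, ij.2)) p)
      = matEval (((g⁻¹ * x : GLn n F) : Matrix (Fin n) (Fin n) F)) p := by
    intro x p
    have : ((g⁻¹ * x : GLn n F) : Matrix (Fin n) (Fin n) F)
        = A * (x : Matrix (Fin n) (Fin n) F) := Units.val_mul _ _
    rw [this]
    unfold matEval
    rw [show ∀ f : (Fin n × Fin n) → F, MvPolynomial.eval f = eval₂Hom (RingHom.id F) f
      from fun _ => rfl]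
    rw [eval₂Hom_bind₁]
    have hfun : (fun i : Fin n × Fin n =>
        eval₂Hom (RingHom.id F)
          (fun ij : Fin n × Fin n => (x : Matrix (Fin n) (Fin n) F) ij.1 ij.2)
          (∑ k, MvPolynomial.C (A i.1 k) * X (k, i.2)))
        = fun ij : Fin n × Fin n => (A * (x : Matrix (Fin n) (Fin n) F)) ij.1 ij.2 := by
      funext ij
      simp [Matrix.mul_apply]
    rw [hfun]
    rfl
  ext y
  simp only [Set.mem_image, Set.mem_setOf_eq]
  constructor
  · rintro ⟨x, hx, rfl⟩ p ⟨q, hq, rfl⟩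
    rw [key]
    have : g⁻¹ * (g * x) = x := by group
    rw [this]
    exact hx q hq
  · intro hy
    refine ⟨g⁻¹ * y, ?_, by group⟩
    intro p hp
    have := hy _ ⟨p, hp, rfl⟩
    rwa [key] at this

lemma diag_abelian {D : Subgroup (GLn n F)} (hD : IsDiagonalizableSubgroup D) :
    ∀ a ∈ D, ∀ b ∈ D, a * b = b * a := by
  obtain ⟨P, hP⟩ := hD
  have comm : ∀ (M N : Matrix (Fin n) (Fin n) F), (∀ i j, i ≠ j → M i j = 0) →
      (∀ i j, i ≠ j → N i j = 0) → M * N = N * M := by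
    intro M N hM hN
    ext i j
    rw [Matrix.mul_apply, Matrix.mul_apply]
    rcases eq_or_ne i j with rfl | hij
    · rw [Finset.sum_eq_single i (fun k _ hk => by rw [hM i k (Ne.symm hk), zero_mul])
        (by simp), Finset.sum_eq_single i (fun k _ hk => by rw [hN i k (Ne.symm hk), zero_mul])
        (by simp), mul_comm]
    · rw [Finset.sum_eq_zero, Finset.sum_eq_zero]
      · intro k _
        rcases eq_or_ne k i with rfl | hk
        · rw [hM k j hij, mul_zero]
        · rw [hN i k (Ne.symm hk), zero_mul]
      · intro k _
        rcases eq_or_ne k i with rfl | hk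
        · rw [hN k j hij, mul_zero]
        · rw [hM i k (Ne.symm hk), zero_mul]
  intro a ha b hb
  have key : (P * a * P⁻¹) * (P * b * P⁻¹) = (P * b * P⁻¹) * (P * a * P⁻¹) := by
    apply Units.ext
    rw [Units.val_mul, Units.val_mul]
    exact comm _ _ (hP a ha) (hP b hb)
  calc a * b = P⁻¹ * ((P * a * P⁻¹) * (P * b * P⁻¹)) * P := by group
    _ = P⁻¹ * ((P * b * P⁻¹) * (P * a * P⁻¹)) * P := by rw [key]
    _ = b * a := by group

end Aux

theorem cartan_component_maximal_torus_in_centralizer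
    {n : ℕ} {F : Type*} [Field F] [IsAlgClosed F]
    (H Ho C Co Z : Subgroup (GLn n F))
    (hH : IsZClosed (H : Set (GLn n F)))
    (hHo : IsIdentityComponent H Ho)
    (hred : IsReductiveGrp Ho)
    (hC : IsCartanSubgroup H C Co)
    (h : GLn n F) (hh : h ∈ C) (hsemi : IsSemisimpleElt h)
    (hgen : ∀ x ∈ C, ∃ k : ℤ, h ^ k * x⁻¹ ∈ Co)
    (hZ : IsIdentityComponent (Subgroup.centralizer {h} ⊓ Ho) Z) :
    IsMaximalTorusIn Z Co := by
  classical
  obtain ⟨hCH, hCdiag, hCcl, hCoid, -, hfin⟩ := hC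
  obtain ⟨hCoC, hCocl, hCoconn, hComax⟩ := hCoid
  obtain ⟨hHoH, -, -, hHomax⟩ := hHo
  obtain ⟨hZle, hZcl, hZconn, hZmax⟩ := hZ
  have hCab : ∀ a ∈ C, ∀ b ∈ C, a * b = b * a := diag_abelian hCdiag
  -- Co ≤ Ho
  have hCoHo : Co ≤ Ho := by
    intro x hx
    exact hHomax (Co : Set (GLn n F)) (fun y hy => hCH (hCoC hy)) hCocl hCoconn Co.one_mem hx
  -- Co ≤ Z
  have hCoZ : Co ≤ Z := by
    intro x hx
    refine hZmax (Co : Set (GLn n F)) ?_ hCocl hCoconn Co.one_mem hx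
    intro y hy
    refine Subgroup.mem_inf.mpr ⟨?_, hCoHo hy⟩
    rw [Subgroup.mem_centralizer_iff]
    rintro z hz
    rw [Set.mem_singleton_iff] at hz
    rw [hz]
    exact hCab h hh y (hCoC hy)
  refine ⟨hCoZ, ⟨?_, hCocl, hCoconn⟩, ?_⟩
  · obtain ⟨P, hP⟩ := hCdiag
    exact ⟨P, fun g hg => hP g (hCoC hg)⟩
  -- maximality
  intro T' hT'Z hT'tor hCoT'
  obtain ⟨hT'diag, hT'cl, hT'conn⟩ := hT'tor
  have hT'ab : ∀ a ∈ T', ∀ b ∈ T', a * b = b * a := diag_abelian hT'diag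
  -- every element of T' commutes with h
  have hT'h : ∀ t ∈ T', Commute h t := by
    intro t ht
    have : t ∈ Subgroup.centralizer {h} := (Subgroup.mem_inf.mp (hZle (hT'Z ht))).1
    rw [Subgroup.mem_centralizer_iff] at this
    exact this h rfl
  -- every element of T' commutes with every element of C
  have hT'C : ∀ t ∈ T', ∀ x ∈ C, t * x = x * t := by
    intro t ht x hx
    obtain ⟨k, hk⟩ := hgen x hx
    have hxeq : x = (h ^ k * x⁻¹)⁻¹ * h ^ k := by group
    have h1 : Commute t ((h ^ k * x⁻¹)⁻¹) := by
      have : Commute t (h ^ k * x⁻¹) := hT'ab t ht _ (hCoT' hk)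
      exact this.inv_right
    have h2 : Commute t (h ^ k) := ((hT'h t ht).symm.zpow_right k)
    have : Commute t x := by
      rw [hxeq]
      exact h1.mul_right h2
    exact this
  -- T' ≤ H ⊓ normalizer C
  have hT'HN : T' ≤ H ⊓ Subgroup.normalizer (C : Set (GLn n F)) := by
    intro t ht
    refine Subgroup.mem_inf.mpr ⟨hHoH ((Subgroup.mem_inf.mp (hZle (hT'Z ht))).2), ?_⟩
    rw [Subgroup.mem_normalizer_iff]
    intro x
    constructor
    · intro hx
      have : t * x * t⁻¹ = x := by
        rw [hT'C t ht x hx]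
        group
      rw [this]
      exact hx
    · intro hx
      have heq : t * (t * x * t⁻¹) * t⁻¹ = t * x * t⁻¹ := by
        rw [hT'C t ht _ hx]
        group
      have : t * x * t⁻¹ = x := by
        have := heq
        -- from t * y * t⁻¹ = y with y = t*x*t⁻¹, deduce x = y
        -- t * (t*x*t⁻¹) * t⁻¹ = t*x*t⁻¹  ⇒  t*x*t⁻¹ = x? no: apply conj by t⁻¹:
        have h3 : t * x * t⁻¹ = t⁻¹ * (t * (t * x * t⁻¹) * t⁻¹) * t := by group
        rw [heq] at h3
        -- h3 : t*x*t⁻¹ = t⁻¹ * (t*x*t⁻¹) * t = x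
        rw [h3]
        group
      rw [← this]
      exact hx
  -- finite relindex of C in T'
  have hrel : C.relIndex T' ≠ 0 := by
    intro h0
    exact hfin (Subgroup.relIndex_eq_zero_of_le_right hT'HN h0)
  haveI : (C.subgroupOf T').FiniteIndex := ⟨hrel⟩
  haveI : Finite (T' ⧸ C.subgroupOf T') := Subgroup.finite_quotient_of_finiteIndex (H := C.subgroupOf T')
  haveI := Fintype.ofFinite (T' ⧸ C.subgroupOf T')
  -- cover T' by cosets of C ∩ T'
  set K : Set (GLn n F) := (C : Set (GLn n F)) ∩ (T' : Set (GLn n F)) with hK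
  have hKcl : IsZClosed K := isZClosed_inter hCcl hT'cl
  have hcover : (T' : Set (GLn n F)) ⊆
      ⋃ q ∈ (Finset.univ : Finset (T' ⧸ C.subgroupOf T')),
        (fun y => ((Quotient.out q : T') : GLn n F) * y) '' K := by
    intro t ht
    set q : T' ⧸ C.subgroupOf T' := QuotientGroup.mk ⟨t, ht⟩ with hq
    refine Set.mem_biUnion (Finset.mem_univ q) ?_
    set r : T' := Quotient.out q with hr
    have hout : (QuotientGroup.mk r : T' ⧸ C.subgroupOf T')
        = QuotientGroup.mk (⟨t, ht⟩ : T') := by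
      rw [hr, hq]
      exact QuotientGroup.out_eq' _
    have hmem : r⁻¹ * ⟨t, ht⟩ ∈ C.subgroupOf T' := (QuotientGroup.eq).mp hout
    refine ⟨((r⁻¹ * ⟨t, ht⟩ : T') : GLn n F), ⟨Subgroup.mem_subgroupOf.mp hmem, (r⁻¹ * ⟨t, ht⟩ : T').2⟩, ?_⟩
    push_cast
    group
  obtain ⟨q, -, hq⟩ := zconnected_subset_of_biUnion hT'conn _ _
    (fun a _ => isZClosed_smul _ hKcl) hcover
  -- the representative lies in C since 1 ∈ T'
  set r : GLn n F := ((Quotient.out q : T') : GLn n F) with hr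
  have h1 : (1 : GLn n F) ∈ (fun y => r * y) '' K := hq T'.one_mem
  obtain ⟨y, hyK, hy1⟩ := h1
  have hrC : r ∈ C := by
    have hinv : r⁻¹ = y := inv_eq_of_mul_eq_one_right hy1
    have hyC : y ∈ C := hyK.1
    rw [← hinv] at hyC
    exact (inv_mem_iff).mp hyC
  -- T' ≤ C
  have hT'C' : (T' : Set (GLn n F)) ⊆ (C : Set (GLn n F)) := by
    intro t ht
    obtain ⟨y, hyK, rfl⟩ := hq ht
    exact mul_mem hrC hyK.1
  -- T' ≤ Co by identity component maximality
  have hT'Co : (T' : Set (GLn n F)) ⊆ (Co : Set (GLn n F)) :=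
    hComax _ hT'C' hT'cl hT'conn T'.one_mem
  exact le_antisymm (fun x hx => hT'Co hx) hCoT'
end

section
/- Let G be a linear algebraic group over an algebraically closed field with G° reductive, and C a Cartan subgroup with maximal torus T_C = Z_{G°}(C°). Then C° is not contained in the kernel of any root of T_C; consequently the set of elements of C° that are regular semisimple in G° contains a nonempty open dense subset of C°. -/
open Matrix

/- ### Auxiliary lemmas -/

lemma matEval_mul' {n : ℕ} {F : Type*} [Field F] (M : Matrix (Fin n) (Fin n) F)
    (p q : MvPolynomial (Fin n × Fin n) F) :
    matEval M (p * q) = matEval M p * matEval M q := by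
  simp [matEval]

lemma matEval_sub' {n : ℕ} {F : Type*} [Field F] (M : Matrix (Fin n) (Fin n) F)
    (p q : MvPolynomial (Fin n × Fin n) F) :
    matEval M (p - q) = matEval M p - matEval M q := by
  simp [matEval]

lemma matEval_one' {n : ℕ} {F : Type*} [Field F] (M : Matrix (Fin n) (Fin n) F) :
    matEval M 1 = 1 := by simp [matEval]

lemma matEval_prod' {n : ℕ} {F : Type*} [Field F] (M : Matrix (Fin n) (Fin n) F)
    {ι : Type*} (S : Finset ι) (p : ι → MvPolynomial (Fin n × Fin n) F) :
    matEval M (∏ s ∈ S, p s) = ∏ s ∈ S, matEval M (p s) := by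
  simp [matEval]

lemma isZClosed_single {n : ℕ} {F : Type*} [Field F] (p : MvPolynomial (Fin n × Fin n) F) :
    IsZClosed {g : GLn n F | matEval (g : Matrix (Fin n) (Fin n) F) p = 0} :=
  ⟨{p}, by ext g; simp⟩

lemma prod_vanish_irred {n : ℕ} {F : Type*} [Field F] {Co : Set (GLn n F)}
    (hconn : ZConnected Co) {ι : Type*} [DecidableEq ι] (p : ι → MvPolynomial (Fin n × Fin n) F) :
    ∀ S : Finset ι,
    (∀ s ∈ S, ¬ (Co ⊆ {g : GLn n F | matEval (g : Matrix (Fin n) (Fin n) F) (p s) = 0})) →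
    ¬ (Co ⊆ {g : GLn n F | matEval (g : Matrix (Fin n) (Fin n) F) (∏ s ∈ S, p s) = 0}) := by
  intro S
  induction S using Finset.induction_on with
  | empty =>
    intro _ hsub
    obtain ⟨g, hg⟩ := hconn.1
    have := hsub hg
    simp [matEval_one'] at this
  | insert a S ha ih =>
    intro h hsub
    have hcov : Co ⊆ {g : GLn n F | matEval (g : Matrix (Fin n) (Fin n) F) (p a) = 0} ∪
        {g : GLn n F | matEval (g : Matrix (Fin n) (Fin n) F) (∏ s ∈ S, p s) = 0} := by
      intro g hg
      have := hsub hg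
      rw [Set.mem_setOf_eq, Finset.prod_insert ha, matEval_mul'] at this
      rcases mul_eq_zero.mp this with h1 | h1
      · exact Or.inl h1
      · exact Or.inr h1
    rcases hconn.2 _ _ (isZClosed_single _) (isZClosed_single _) hcov with h1 | h1
    · exact h a (Finset.mem_insert_self a S) h1
    · exact ih (fun s hs => h s (Finset.mem_insert_of_mem hs)) h1

lemma diag_nilpotent_eq_zero {n : ℕ} {F : Type*} [Field F] (M : Matrix (Fin n) (Fin n) F)
    (hd : ∀ i j : Fin n, i ≠ j → M i j = 0) (hn : IsNilpotent M) : M = 0 := by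
  have hM : M = Matrix.diagonal (fun i => M i i) := by
    ext i j
    by_cases h : i = j
    · subst h; simp
    · rw [Matrix.diagonal_apply_ne _ h, hd i j h]
  obtain ⟨k, hk⟩ := hn
  rcases Nat.eq_zero_or_pos k with rfl | hk0
  · rw [pow_zero] at hk
    calc M = M * 1 := by rw [mul_one]
    _ = M * 0 := by rw [hk]
    _ = 0 := by rw [mul_zero]
  · rw [hM, Matrix.diagonal_pow] at hk
    have hz : ∀ i, M i i = 0 := by
      intro i
      have h2 := congrFun (congrFun hk i) i
      rw [Matrix.diagonal_apply_eq] at h2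
      have h3 : (M i i) ^ k = 0 := by simpa using h2
      exact pow_eq_zero_iff hk0.ne' |>.mp h3
    rw [hM]
    ext i j
    by_cases h : i = j
    · subst h; simp [hz]
    · simp [Matrix.diagonal_apply_ne _ h]

noncomputable def dpoly {n : ℕ} {F : Type*} [Field F] (A B : Matrix (Fin n) (Fin n) F)
    (i : Fin n) : MvPolynomial (Fin n × Fin n) F :=
  ∑ a : Fin n, ∑ b : Fin n, MvPolynomial.C (A i a * B b i) * MvPolynomial.X (a, b)

lemma matEval_dpoly {n : ℕ} {F : Type*} [Field F] (A B M : Matrix (Fin n) (Fin n) F) (i : Fin n) :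
    matEval M (dpoly A B i) = (A * M * B) i i := by
  simp only [dpoly, matEval, map_sum, _root_.map_mul, MvPolynomial.eval_C, MvPolynomial.eval_X,
    Matrix.mul_apply, Finset.sum_mul]
  rw [Finset.sum_comm]
  refine Finset.sum_congr rfl fun b _ => Finset.sum_congr rfl fun a _ => by ring

theorem cartan_component_regular_elements_dense
    {n : ℕ} {F : Type*} [Field F] [IsAlgClosed F]
    (G Go C Co TC : Subgroup (GLn n F))
    (hG : IsZClosed (G : Set (GLn n F)))
    (hGo : IsIdentityComponent G Go)
    (hred : IsReductiveGrp Go)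
    (hC : IsCartanSubgroup G C Co)
    (hTC : TC = Subgroup.centralizer (Co : Set (GLn n F)) ⊓ Go)
    (hTCmax : IsMaximalTorusIn Go TC) :
    (∀ u ∈ Go, IsUnipotentMat ((u : GLn n F) : Matrix (Fin n) (Fin n) F) →
        (∀ c ∈ Co, u * c = c * u) → u = 1) ∧
    ∃ Z : Set (GLn n F), IsZClosed Z ∧
      ((Co : Set (GLn n F)) \ Z).Nonempty ∧
      (∀ t ∈ (Co : Set (GLn n F)) \ Z,
        Subgroup.centralizer ({t} : Set (GLn n F)) ⊓ Go = TC) ∧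
      ∀ Z' : Set (GLn n F), IsZClosed Z' →
        (Co : Set (GLn n F)) ⊆ Z' ∪ Z → (Co : Set (GLn n F)) ⊆ Z' := by
  classical
  obtain ⟨P, hP⟩ := hC.2.1
  have hCoC : Co ≤ C := hC.2.2.2.1.1
  have hconn : ZConnected (Co : Set (GLn n F)) := hC.2.2.2.1.2.2.1
  constructor
  · -- unipotent elements commuting with Co are trivial
    intro u hu hunip hcomm
    have huTC : u ∈ TC := by
      rw [hTC]
      exact ⟨Subgroup.mem_centralizer_iff.mpr (fun c hc => (hcomm c hc).symm), hu⟩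
    obtain ⟨Q, hQ⟩ := hTCmax.2.1.1
    set v : GLn n F := Q * u * Q⁻¹ with hv
    have hvval : (v : Matrix (Fin n) (Fin n) F)
        = (Q : Matrix (Fin n) (Fin n) F) * (u : Matrix (Fin n) (Fin n) F)
          * ((Q⁻¹ : GLn n F) : Matrix (Fin n) (Fin n) F) := by
      rw [hv, Units.val_mul, Units.val_mul]
    have hQQ : (Q : Matrix (Fin n) (Fin n) F) * ((Q⁻¹ : GLn n F) : Matrix (Fin n) (Fin n) F)
        = 1 := by
      rw [← Units.val_mul, mul_inv_cancel, Units.val_one]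
    have hM : (v : Matrix (Fin n) (Fin n) F) - 1
        = (Q : Matrix (Fin n) (Fin n) F) * ((u : Matrix (Fin n) (Fin n) F) - 1)
          * ((Q⁻¹ : GLn n F) : Matrix (Fin n) (Fin n) F) := by
      rw [Matrix.mul_sub, Matrix.sub_mul, Matrix.mul_one, hQQ, hvval]
    have hnil : IsNilpotent ((v : Matrix (Fin n) (Fin n) F) - 1) := by
      obtain ⟨k, hk⟩ := hunip
      refine ⟨k, ?_⟩
      rw [hM, Units.conj_pow, hk, mul_zero, zero_mul]
    have hdiag : ∀ i j : Fin n, i ≠ j → ((v : Matrix (Fin n) (Fin n) F) - 1) i j = 0 := by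
      intro i j hij
      have := hQ u huTC i j hij
      simp only [Matrix.sub_apply, Matrix.one_apply_ne hij, sub_zero]
      exact this
    have hzero := diag_nilpotent_eq_zero _ hdiag hnil
    have hv1 : v = 1 := by
      apply Units.ext
      have : (v : Matrix (Fin n) (Fin n) F) = 1 := by
        have := sub_eq_zero.mp hzero
        simpa using this
      simpa using this
    have : u = Q⁻¹ * v * Q := by rw [hv]; group
    rw [hv1] at this
    rw [this]
    group
  · -- existence of the closed set Z
    set A : Matrix (Fin n) (Fin n) F := (P : Matrix (Fin n) (Fin n) F) with hA
    set B : Matrix (Fin n) (Fin n) F := ((P⁻¹ : GLn n F) : Matrix (Fin n) (Fin n) F) with hB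
    have hval : ∀ g : GLn n F,
        ((P * g * P⁻¹ : GLn n F) : Matrix (Fin n) (Fin n) F)
          = A * (g : Matrix (Fin n) (Fin n) F) * B := by
      intro g; rw [Units.val_mul, Units.val_mul]
    -- the difference polynomials
    set pij : Fin n × Fin n → MvPolynomial (Fin n × Fin n) F :=
      fun ij => dpoly A B ij.1 - dpoly A B ij.2 with hpij
    have hevalp : ∀ (g : GLn n F) (ij : Fin n × Fin n),
        matEval (g : Matrix (Fin n) (Fin n) F) (pij ij)
          = ((P * g * P⁻¹ : GLn n F) : Matrix (Fin n) (Fin n) F) ij.1 ij.1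
            - ((P * g * P⁻¹ : GLn n F) : Matrix (Fin n) (Fin n) F) ij.2 ij.2 := by
      intro g ij
      rw [hpij, matEval_sub', matEval_dpoly, matEval_dpoly, hval]
    set Zs : Fin n × Fin n → Set (GLn n F) :=
      fun ij => {g : GLn n F | matEval (g : Matrix (Fin n) (Fin n) F) (pij ij) = 0} with hZs
    set S : Finset (Fin n × Fin n) :=
      Finset.univ.filter (fun ij => ¬ ((Co : Set (GLn n F)) ⊆ Zs ij)) with hS
    set q : MvPolynomial (Fin n × Fin n) F := ∏ ij ∈ S, pij ij with hq
    set Z : Set (GLn n F) := {g : GLn n F | matEval (g : Matrix (Fin n) (Fin n) F) q = 0}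
      with hZ
    have hZclosed : IsZClosed Z := isZClosed_single q
    have hCoZ : ¬ ((Co : Set (GLn n F)) ⊆ Z) := by
      apply prod_vanish_irred hconn pij S
      intro s hs
      exact (Finset.mem_filter.mp hs).2
    obtain ⟨t0, ht0Co, ht0Z⟩ := Set.not_subset.mp hCoZ
    refine ⟨Z, hZclosed, ⟨t0, ht0Co, ht0Z⟩, ?_, ?_⟩
    · -- centralizers of elements off Z equal TC
      intro t ht
      have htCo : t ∈ Co := ht.1
      have htZ : t ∉ Z := ht.2
      -- factors of q do not vanish at t when ij ∈ S
      have hfact : ∀ ij ∈ S, matEval (t : Matrix (Fin n) (Fin n) F) (pij ij) ≠ 0 := by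
        intro ij hij hzero
        apply htZ
        rw [hZ, Set.mem_setOf_eq, hq, matEval_prod']
        exact Finset.prod_eq_zero hij hzero
      apply le_antisymm
      · intro x hx
        have hxGo : x ∈ Go := hx.2
        have hxt : t * x = x * t := Subgroup.mem_centralizer_iff.mp hx.1 t rfl
        rw [hTC]
        refine ⟨Subgroup.mem_centralizer_iff.mpr ?_, hxGo⟩
        intro c hc
        -- matrices of the conjugates
        set Xm : Matrix (Fin n) (Fin n) F := ((P * x * P⁻¹ : GLn n F) : Matrix (Fin n) (Fin n) F)
          with hXm
        set Tm : Matrix (Fin n) (Fin n) F := ((P * t * P⁻¹ : GLn n F) : Matrix (Fin n) (Fin n) F)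
          with hTm
        set Cm : Matrix (Fin n) (Fin n) F := ((P * c * P⁻¹ : GLn n F) : Matrix (Fin n) (Fin n) F)
          with hCm
        have hTd : ∀ i j : Fin n, i ≠ j → Tm i j = 0 := fun i j hij => hP t (hCoC htCo) i j hij
        have hCd : ∀ i j : Fin n, i ≠ j → Cm i j = 0 := fun i j hij => hP c (hCoC hc) i j hij
        have hcommconj : (P * t * P⁻¹) * (P * x * P⁻¹) = (P * x * P⁻¹) * (P * t * P⁻¹) := by
          have h1 : (P * t * P⁻¹) * (P * x * P⁻¹) = P * (t * x) * P⁻¹ := by group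
          have h2 : (P * x * P⁻¹) * (P * t * P⁻¹) = P * (x * t) * P⁻¹ := by group
          rw [h1, h2, hxt]
        have hXT : Tm * Xm = Xm * Tm := by
          rw [hXm, hTm, ← Units.val_mul, ← Units.val_mul, hcommconj]
        have hXoff : ∀ i j : Fin n, i ≠ j → Tm i i ≠ Tm j j → Xm i j = 0 := by
          intro i j hij hT
          have h1 : (Xm * Tm) i j = Xm i j * Tm j j := by
            rw [Matrix.mul_apply]
            rw [Finset.sum_eq_single j]
            · intro k _ hk
              rw [hTd k j hk, mul_zero]
            · intro h; exact absurd (Finset.mem_univ j) h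
          have h2 : (Tm * Xm) i j = Tm i i * Xm i j := by
            rw [Matrix.mul_apply]
            rw [Finset.sum_eq_single i]
            · intro k _ hk
              rw [hTd i k (Ne.symm hk), zero_mul]
            · intro h; exact absurd (Finset.mem_univ i) h
          have h3 : Tm i i * Xm i j = Xm i j * Tm j j := by rw [← h1, ← h2, hXT]
          have h4 : Xm i j * (Tm i i - Tm j j) = 0 := by ring_nf; linear_combination h3
          rcases mul_eq_zero.mp h4 with h | h
          · exact h
          · exact absurd (sub_eq_zero.mp h) hT
        -- show the conjugated matrices commute
        have hXC : Xm * Cm = Cm * Xm := by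
          ext i j
          have h1 : (Xm * Cm) i j = Xm i j * Cm j j := by
            rw [Matrix.mul_apply]
            rw [Finset.sum_eq_single j]
            · intro k _ hk
              by_cases hkj : k = j
              · exact absurd hkj hk
              · rw [hCd k j hkj, mul_zero]
            · intro h; exact absurd (Finset.mem_univ j) h
          have h2 : (Cm * Xm) i j = Cm i i * Xm i j := by
            rw [Matrix.mul_apply]
            rw [Finset.sum_eq_single i]
            · intro k _ hk
              rw [hCd i k (Ne.symm hk), zero_mul]
            · intro h; exact absurd (Finset.mem_univ i) h
          rw [h1, h2]
          by_cases hij : i = j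
          · subst hij; ring
          · by_cases hsub : (Co : Set (GLn n F)) ⊆ Zs (i, j)
            · -- all of Co has equal (i,i) and (j,j) conjugated entries
              have hcz := hsub hc
              rw [hZs, Set.mem_setOf_eq, hevalp] at hcz
              have : Cm i i = Cm j j := by
                rw [hCm]; exact sub_eq_zero.mp hcz
              rw [this]; ring
            · -- (i,j) ∈ S, so t separates i and j, hence Xm i j = 0
              have hijS : (i, j) ∈ S := by
                rw [hS, Finset.mem_filter]
                exact ⟨Finset.mem_univ _, hsub⟩
              have hne := hfact (i, j) hijS
              rw [hevalp] at hne
              have hTne : Tm i i ≠ Tm j j := by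
                rw [hTm]
                intro h
                exact hne (by rw [h]; ring)
              rw [hXoff i j hij hTne, mul_zero, zero_mul]
        -- transfer back to c and x
        have hconj : (P * c * P⁻¹) * (P * x * P⁻¹) = (P * x * P⁻¹) * (P * c * P⁻¹) := by
          apply Units.ext
          have e1 : (P : Matrix (Fin n) (Fin n) F) * (c : Matrix (Fin n) (Fin n) F)
              * ((P⁻¹ : GLn n F) : Matrix (Fin n) (Fin n) F) = Cm := by
            rw [hCm]; simp only [Units.val_mul]
          have e2 : (P : Matrix (Fin n) (Fin n) F) * (x : Matrix (Fin n) (Fin n) F)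
              * ((P⁻¹ : GLn n F) : Matrix (Fin n) (Fin n) F) = Xm := by
            rw [hXm]; simp only [Units.val_mul]
          simp only [Units.val_mul]
          rw [e1, e2, hXC]
        have h5 : P * (c * x) * P⁻¹ = P * (x * c) * P⁻¹ := by
          have h1 : (P * c * P⁻¹) * (P * x * P⁻¹) = P * (c * x) * P⁻¹ := by group
          have h2 : (P * x * P⁻¹) * (P * c * P⁻¹) = P * (x * c) * P⁻¹ := by group
          rw [← h1, ← h2, hconj]
        have h6 : c * x = x * c := by
          have := mul_right_cancel h5
          exact mul_left_cancel this
        exact h6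
      · -- TC ≤ centralizer {t} ⊓ Go
        rw [hTC]
        intro x hx
        refine ⟨Subgroup.mem_centralizer_iff.mpr ?_, hx.2⟩
        intro h hh
        rw [Set.mem_singleton_iff.mp hh]
        exact Subgroup.mem_centralizer_iff.mp hx.1 t htCo
    · -- density
      intro Z' hZ' hsub
      rcases hconn.2 Z' Z hZ' hZclosed hsub with h | h
      · exact h
      · exact absurd (h ht0Co) ht0Z
end

section
/- Let G be a linear algebraic group over an algebraically closed field with G° reductive, G_i a coset of G°, and C a Cartan subgroup associated to G_i decomposed as C ≅ C° × ⟨μ⟩ with μ ∈ C ∩ G_i of order n. If t ∈ C° is such that t^n is regular semisimple in G°, then tμ is a regular semisimple element of G_i, i.e., the identity component of Z_{G°}(tμ) is a torus. -/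
open Matrix

theorem regular_semisimple_in_coset
    {N : ℕ} {F : Type*} [Field F] [IsAlgClosed F]
    (G Go C Co : Subgroup (GLn N F))
    (hG : IsZClosed (G : Set (GLn N F)))
    (hGo : IsIdentityComponent G Go)
    (hred : IsReductiveGrp Go)
    (hC : IsCartanSubgroup G C Co)
    (μ : GLn N F) (hμC : μ ∈ C) (n : ℕ) (hn : 0 < n) (hμn : orderOf μ = n)
    (hcomm : ∀ x ∈ C, ∀ y ∈ C, x * y = y * x)
    (hdecomp : ∀ x ∈ C, ∃ t ∈ Co, ∃ k : ℕ, x = t * μ ^ k)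
    (hdisj : ∀ k : ℕ, μ ^ k ∈ Co → μ ^ k = 1)
    (hgen : ∀ x ∈ C, ∃ k : ℤ, μ ^ k * x⁻¹ ∈ Co)
    (t : GLn N F) (ht : t ∈ Co)
    (htss : IsSemisimpleElt (t ^ n))
    (htreg : IsMaximalTorusIn Go
      (Subgroup.centralizer ({t ^ n} : Set (GLn N F)) ⊓ Go)) :
    ∀ Z : Subgroup (GLn N F),
      IsIdentityComponent (Subgroup.centralizer ({t * μ} : Set (GLn N F)) ⊓ Go) Z →
        IsAlgTorus Z := by
  intro Z hZ
  obtain ⟨hZle, hZcl, hZconn, -⟩ := hZ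
  obtain ⟨hCG, -, -, ⟨hCoC, -⟩, -⟩ := hC
  have htμ : Commute t μ := hcomm t (hCoC ht) μ hμC
  have hkey : (t * μ) ^ n = t ^ n := by
    have hμ1 : μ ^ n = 1 := hμn ▸ pow_orderOf_eq_one μ
    rw [htμ.mul_pow, hμ1, mul_one]
  have hZT : Z ≤ Subgroup.centralizer ({t ^ n} : Set (GLn N F)) ⊓ Go := by
    refine le_trans hZle (inf_le_inf_right _ ?_)
    intro g hg
    rw [Subgroup.mem_centralizer_iff] at hg ⊢
    intro h hh
    rw [Set.mem_singleton_iff] at hh; subst hh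
    have c : Commute (t * μ) g := hg (t * μ) rfl
    have := c.pow_left n
    rwa [hkey] at this
  obtain ⟨-, ⟨⟨P, hP⟩, -, -⟩, -⟩ := htreg
  exact ⟨⟨P, fun g hg => hP g (hZT hg)⟩, hZcl, hZconn⟩
end
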